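/- For all real numbers a, b ≥ 0 and all ℓ ≥ 1, one has (1/32)·e^{a+b+ℓ} ≤ cosh(a)·cosh(b)·cosh(ℓ) − sinh(a)·sinh(b) ≤ e^{a+b+ℓ}. -/
import Mathlib

open Real

lemma half_exp_le_cosh (x : ℝ) : Real.exp x / 2 ≤ Real.cosh x := by
  rw [Real.cosh_eq]
  have := (Real.exp_pos (-x)).le
  linarith

lemma cosh_le_exp_of_nonneg {x : ℝ} (hx : 0 ≤ x) : Real.cosh x ≤ Real.exp x := by
  rw [Real.cosh_eq]
  have h1 : Real.exp (-x) ≤ 1 := Real.exp_le_one_iff.mpr (by linarith)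
  have h2 : 1 ≤ Real.exp x := Real.one_le_exp hx
  linarith

/-- Two-sided exponential estimate for
`t = cosh a · cosh b · cosh ℓ − sinh a · sinh b`, for `a, b ≥ 0`, `ℓ ≥ 1`. -/
theorem quadrilateral_cosh_bounds (a b ℓ : ℝ) (ha : 0 ≤ a) (hb : 0 ≤ b) (hℓ : 1 ≤ ℓ) :
    (1 / 32) * Real.exp (a + b + ℓ) ≤
        Real.cosh a * Real.cosh b * Real.cosh ℓ - Real.sinh a * Real.sinh b ∧
      Real.cosh a * Real.cosh b * Real.cosh ℓ - Real.sinh a * Real.sinh b ≤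
        Real.exp (a + b + ℓ) := by
  have hsa : 0 ≤ Real.sinh a := by rw [← Real.sinh_zero]; exact Real.sinh_le_sinh.mpr ha
  have hsb : 0 ≤ Real.sinh b := by rw [← Real.sinh_zero]; exact Real.sinh_le_sinh.mpr hb
  have hca : Real.sinh a ≤ Real.cosh a := (Real.sinh_lt_cosh a).le
  have hcb : Real.sinh b ≤ Real.cosh b := (Real.sinh_lt_cosh b).le
  have hcap : (0:ℝ) < Real.cosh a := Real.cosh_pos a
  have hcbp : (0:ℝ) < Real.cosh b := Real.cosh_pos b
  have hea : Real.exp a / 2 ≤ Real.cosh a := half_exp_le_cosh a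
  have heb : Real.exp b / 2 ≤ Real.cosh b := half_exp_le_cosh b
  have hel : Real.exp ℓ / 2 ≤ Real.cosh ℓ := half_exp_le_cosh ℓ
  have hL : (8:ℝ)/3 ≤ Real.exp ℓ := by
    have : Real.exp 1 ≤ Real.exp ℓ := Real.exp_le_exp.mpr hℓ
    have h := Real.add_one_le_exp (1:ℝ)
    nlinarith [Real.exp_one_gt_d9]
  have hcl1 : Real.exp ℓ / 8 ≤ Real.cosh ℓ - 1 := by linarith
  have hexp : Real.exp (a + b + ℓ) = Real.exp a * Real.exp b * Real.exp ℓ := by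
    rw [Real.exp_add, Real.exp_add]
  have hap : (0:ℝ) < Real.exp a := Real.exp_pos a
  have hbp : (0:ℝ) < Real.exp b := Real.exp_pos b
  have hlp : (0:ℝ) < Real.exp ℓ := Real.exp_pos ℓ
  constructor
  · have key : Real.cosh a * Real.cosh b * (Real.cosh ℓ - 1) ≤
        Real.cosh a * Real.cosh b * Real.cosh ℓ - Real.sinh a * Real.sinh b := by
      nlinarith [mul_le_mul hca hcb hsb hcap.le]
    have key2 : Real.exp a / 2 * (Real.exp b / 2) * (Real.exp ℓ / 8) ≤
        Real.cosh a * Real.cosh b * (Real.cosh ℓ - 1) := by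
      have h1 : (0:ℝ) ≤ Real.exp ℓ / 8 := by positivity
      have h2 : (0:ℝ) ≤ Real.exp b / 2 := by positivity
      have h3 : (0:ℝ) ≤ Real.exp a / 2 := by positivity
      exact mul_le_mul (mul_le_mul hea heb h2 hcap.le) hcl1 h1 (by positivity)
    rw [hexp]; nlinarith [key, key2]
  · have hclp : Real.cosh ℓ ≤ Real.exp ℓ := cosh_le_exp_of_nonneg (by linarith)
    have hcae : Real.cosh a ≤ Real.exp a := cosh_le_exp_of_nonneg ha
    have hcbe : Real.cosh b ≤ Real.exp b := cosh_le_exp_of_nonneg hb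
    have : Real.cosh a * Real.cosh b * Real.cosh ℓ ≤ Real.exp a * Real.exp b * Real.exp ℓ :=
      mul_le_mul (mul_le_mul hcae hcbe hcbp.le hap.le) hclp (Real.cosh_pos ℓ).le (by positivity)
    rw [hexp]
    nlinarith [mul_nonneg hsa hsb]
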